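/- Let P be column stochastic irreducible with invariant distribution μ, and let ν > 0 be a probability vector. Then A(I − P + μ𝟙ᵀ)D(ν) is invertible, and S(ν) := D(ν)[A(I − P + μ𝟙ᵀ)D(ν)]^{−1} A(I − P + μ𝟙ᵀ) is a projection (S(ν)² = S(ν)) whose range equals the range of D(ν). -/

import Mathlib

open Matrix BigOperators

/-- A matrix is column stochastic: nonnegative entries, each column sums to one. -/
def ColStoch {m : Type*} [Fintype m] (M : Matrix m m ℝ) : Prop :=
  (∀ i j, 0 ≤ M i j) ∧ ∀ j, ∑ i, M i j = 1

/-- Irreducibility of a matrix via its pattern of nonzero entries: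
the associated directed graph is strongly connected. -/
def Irred {m : Type*} [Fintype m] [DecidableEq m] (M : Matrix m m ℝ) : Prop :=
  ∀ i j, ∃ k : ℕ, 0 < k ∧ (M ^ k) i j ≠ 0

/-- Weighted inner product `⟨x,y⟩_w = ∑ i, x i * y i * w i`. -/
def innerW {m : Type*} [Fintype m] (w x y : m → ℝ) : ℝ := ∑ i, x i * y i * w i

/-- Weighted `ℓ²(w)` norm. -/
noncomputable def normW {m : Type*} [Fintype m] (w x : m → ℝ) : ℝ :=
  Real.sqrt (innerW w x x)

/-- Operator norm of a matrix with respect to the `ℓ²(w)` norm. -/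
noncomputable def opNormW {m : Type*} [Fintype m] (w : m → ℝ) (M : Matrix m m ℝ) : ℝ :=
  sInf {c | 0 ≤ c ∧ ∀ x, normW w (M.mulVec x) ≤ c * normW w x}

/-- Aggregation operator for the partition `{f⁻¹(i)}` of `Fin N`. -/
def Agg {N n : ℕ} (f : Fin N → Fin n) : Matrix (Fin n) (Fin N) ℝ :=
  fun i x => if f x = i then 1 else 0

/-- Disaggregation operator for the partition `{f⁻¹(i)}` and weight vector ν. -/
noncomputable def Disagg {N n : ℕ} (f : Fin N → Fin n) (ν : Fin N → ℝ) :
    Matrix (Fin N) (Fin n) ℝ :=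
  fun j i => if f j = i then ν j / (Agg f).mulVec ν i else 0

/-- Coarse approximation `C(ν) = A P D(ν)`. -/
noncomputable def CoarseC {N n : ℕ} (P : Matrix (Fin N) (Fin N) ℝ) (f : Fin N → Fin n)
    (ν : Fin N → ℝ) : Matrix (Fin n) (Fin n) ℝ := Agg f * P * Disagg f ν

/-- `P̂ = P - μ 𝟙ᵀ`. -/
def hatP {N : ℕ} (P : Matrix (Fin N) (Fin N) ℝ) (μ : Fin N → ℝ) :
    Matrix (Fin N) (Fin N) ℝ := P - vecMulVec μ 1

/-- Coarse projection `S(ν) = D(ν)[A(I-P+μ𝟙ᵀ)D(ν)]⁻¹ A(I-P+μ𝟙ᵀ)`. -/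
noncomputable def CoarseS {N n : ℕ} (P : Matrix (Fin N) (Fin N) ℝ) (f : Fin N → Fin n)
    (μ ν : Fin N → ℝ) : Matrix (Fin N) (Fin N) ℝ :=
  Disagg f ν * (Agg f * (1 - P + vecMulVec μ 1) * Disagg f ν)⁻¹ *
    (Agg f * (1 - P + vecMulVec μ 1))

/-- Orthogonal coarse projection `Π(ν) = D(ν) A`. -/
noncomputable def PiProj {N n : ℕ} (f : Fin N → Fin n) (ν : Fin N → ℝ) :
    Matrix (Fin N) (Fin N) ℝ := Disagg f ν * Agg f

/-- Error propagation operator `J(ν) = P̂ (I - S(ν))`. -/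
noncomputable def Jop {N n : ℕ} (P : Matrix (Fin N) (Fin N) ℝ) (f : Fin N → Fin n)
    (μ ν : Fin N → ℝ) : Matrix (Fin N) (Fin N) ℝ := hatP P μ * (1 - CoarseS P f μ ν)

/-- Spectrum (set of complex eigenvalues) of a real matrix. -/
noncomputable def specC {N : ℕ} (M : Matrix (Fin N) (Fin N) ℝ) : Set ℂ :=
  spectrum ℂ (M.map (Complex.ofReal))

/-- Spectral radius of a real matrix. -/
noncomputable def specRad {N : ℕ} (M : Matrix (Fin N) (Fin N) ℝ) : ℝ :=
  sSup ((fun z : ℂ => ‖z‖) '' specC M)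

/-- The `ℓ²(1/μ)`-adjoint `diag(μ) Mᵀ diag(1/μ)`. -/
noncomputable def adjW {N : ℕ} (μ : Fin N → ℝ) (M : Matrix (Fin N) (Fin N) ℝ) :
    Matrix (Fin N) (Fin N) ℝ :=
  Matrix.diagonal μ * Mᵀ * Matrix.diagonal (fun i => (μ i)⁻¹)

/-- The ε-inner product `⟨x,y⟩_ε = ⟨x,(I-Π(μ))y⟩_{1/μ} + ε ⟨x,Π(μ)y⟩_{1/μ}`. -/
noncomputable def innerEps {N n : ℕ} (f : Fin N → Fin n) (μ : Fin N → ℝ) (ε : ℝ)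
    (x y : Fin N → ℝ) : ℝ :=
  innerW (fun i => (μ i)⁻¹) x ((1 - PiProj f μ).mulVec y) +
    ε * innerW (fun i => (μ i)⁻¹) x ((PiProj f μ).mulVec y)

/-- The ε-norm. -/
noncomputable def normEps {N n : ℕ} (f : Fin N → Fin n) (μ : Fin N → ℝ) (ε : ℝ)
    (x : Fin N → ℝ) : ℝ := Real.sqrt (innerEps f μ ε x x)

/-- Operator norm induced by the ε-norm. -/
noncomputable def opNormEps {N n : ℕ} (f : Fin N → Fin n) (μ : Fin N → ℝ) (ε : ℝ)
    (M : Matrix (Fin N) (Fin N) ℝ) : ℝ :=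
  sInf {c | 0 ≤ c ∧ ∀ x, normEps f μ ε (M.mulVec x) ≤ c * normEps f μ ε x}

section stmt9aux

set_option linter.unusedSectionVars false

lemma sum_pos_of_mem {α : Type*} [Fintype α] (g : α → ℝ) (hg : ∀ a, 0 ≤ g a) (a0 : α)
    (h : 0 < g a0) : 0 < ∑ a, g a := by
  have := Finset.single_le_sum (fun a _ => hg a) (Finset.mem_univ a0); linarith

lemma exists_pos_of_sum_pos {α : Type*} [Fintype α] (g : α → ℝ) (hg : ∀ a, 0 ≤ g a)
    (h : 0 < ∑ a, g a) : ∃ a, 0 < g a := by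
  by_contra hc; push_neg at hc
  have : ∑ a, g a = 0 := Finset.sum_eq_zero (fun a _ => le_antisymm (hc a) (hg a))
  linarith

lemma entry_mul_nonneg {α β γ : Type*} [Fintype α] [Fintype β] [Fintype γ]
    (X : Matrix α β ℝ) (Y : Matrix β γ ℝ)
    (hX : ∀ i j, 0 ≤ X i j) (hY : ∀ i j, 0 ≤ Y i j) : ∀ i j, 0 ≤ (X * Y) i j := by
  intro i j
  rw [Matrix.mul_apply]
  exact Finset.sum_nonneg fun l _ => mul_nonneg (hX i l) (hY l j)

lemma entry_pow_nonneg {α : Type*} [Fintype α] [DecidableEq α] (X : Matrix α α ℝ)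
    (hX : ∀ i j, 0 ≤ X i j) : ∀ m i j, 0 ≤ (X ^ m) i j := by
  intro m
  induction m with
  | zero => intro i j; rw [pow_zero, Matrix.one_apply]; split <;> norm_num
  | succ t ih =>
      intro i j
      rw [pow_succ, Matrix.mul_apply]
      exact Finset.sum_nonneg fun l _ => mul_nonneg (ih i l) (hX l j)

lemma colsum_mul {α β γ : Type*} [Fintype α] [Fintype β] [Fintype γ]
    (X : Matrix α β ℝ) (Y : Matrix β γ ℝ)
    (hX : ∀ j, ∑ i, X i j = 1) (hY : ∀ j, ∑ i, Y i j = 1) : ∀ j, ∑ i, (X * Y) i j = 1 := by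
  intro j
  simp only [Matrix.mul_apply]
  rw [Finset.sum_comm]
  simp [← Finset.sum_mul, hX, hY]

lemma colsum_mulVec {α β : Type*} [Fintype α] [Fintype β] (M : Matrix α β ℝ)
    (h : ∀ j, ∑ i, M i j = 1) (z : β → ℝ) : ∑ i, M.mulVec z i = ∑ j, z j := by
  simp only [Matrix.mulVec, dotProduct]
  rw [Finset.sum_comm]
  simp [← Finset.sum_mul, h]

section agg
variable {N n : ℕ} (f : Fin N → Fin n) (ν : Fin N → ℝ)

lemma aggMulVec_apply (k : Fin n) :
    (Agg f).mulVec ν k = ∑ j, if f j = k then ν j else 0 := by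
  simp [Agg, Matrix.mulVec, dotProduct, ite_mul]

lemma aggMulVec_pos (hf : Function.Surjective f) (hν : ∀ i, 0 < ν i) (k : Fin n) :
    0 < (Agg f).mulVec ν k := by
  obtain ⟨j, hj⟩ := hf k
  rw [aggMulVec_apply]
  refine sum_pos_of_mem _ (fun a => ?_) j (by simp [hj, hν j])
  split
  · exact (hν _).le
  · exact le_refl _

lemma agg_nonneg : ∀ i j, 0 ≤ Agg f i j := by
  intro i j; unfold Agg; split <;> norm_num

lemma disagg_nonneg (hf : Function.Surjective f) (hν : ∀ i, 0 < ν i) :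
    ∀ i j, 0 ≤ Disagg f ν i j := by
  intro i j; unfold Disagg; split
  · exact div_nonneg (hν i).le (aggMulVec_pos f ν hf hν _).le
  · exact le_refl _

lemma colsum_agg : ∀ a, ∑ k, Agg f k a = 1 := by
  intro a; simp [Agg]

lemma colsum_disagg (hf : Function.Surjective f) (hν : ∀ i, 0 < ν i) :
    ∀ l, ∑ j, Disagg f ν j l = 1 := by
  intro l
  have h := (aggMulVec_pos f ν hf hν l).ne'
  simp only [Disagg]
  have e : ∀ j, (if f j = l then ν j / (Agg f).mulVec ν l else 0)
      = (if f j = l then ν j else 0) / (Agg f).mulVec ν l := by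
    intro j; split <;> simp
  rw [Finset.sum_congr rfl fun j _ => e j, ← Finset.sum_div, ← aggMulVec_apply, div_self h]

lemma agg_mul_disagg (hf : Function.Surjective f) (hν : ∀ i, 0 < ν i) :
    Agg f * Disagg f ν = 1 := by
  ext k l
  rw [Matrix.mul_apply, Matrix.one_apply]
  by_cases hkl : k = l
  · subst hkl
    simp only [if_pos rfl]
    have e : ∀ j, Agg f k j * Disagg f ν j k = Disagg f ν j k := by
      intro j; simp only [Agg, Disagg]; split_ifs <;> simp
    rw [Finset.sum_congr rfl fun j _ => e j]
    exact colsum_disagg f ν hf hν k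
  · rw [if_neg hkl]
    refine Finset.sum_eq_zero fun j _ => ?_
    simp only [Agg, Disagg]
    split_ifs with h1 h2
    · exact absurd (h1 ▸ h2) hkl
    · simp
    · simp
    · simp

lemma disagg_mul_agg_diag (b : Fin N) :
    (Disagg f ν * Agg f) b b = ν b / (Agg f).mulVec ν (f b) := by
  simp [Disagg, Agg, Matrix.mul_apply]

end agg

lemma stoch_fixed {n : ℕ} (C : Matrix (Fin n) (Fin n) ℝ)
    (hC0 : ∀ i j, 0 ≤ C i j) (hC1 : ∀ j, ∑ i, C i j = 1)
    (hCirr : ∀ i j, ∃ m : ℕ, 0 < m ∧ 0 < (C ^ m) i j)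
    (x : Fin n → ℝ) (hfix : C.mulVec x = x) (hsum : ∑ i, x i = 0) : x = 0 := by
  by_contra hx
  obtain ⟨j0, hj0⟩ : ∃ j0, x j0 ≠ 0 := by
    by_contra hc; push_neg at hc; exact hx (funext hc)
  set y : Fin n → ℝ := fun i => |x i| with hy
  have hy0 : ∀ i, 0 ≤ y i := fun i => abs_nonneg _
  have hmv : ∀ (M : Matrix (Fin n) (Fin n) ℝ) (z : Fin n → ℝ) (i : Fin n),
      M.mulVec z i = ∑ l, M i l * z l := by
    intro M z i; simp [Matrix.mulVec, dotProduct]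
  have hle : ∀ i, y i ≤ C.mulVec y i := by
    intro i
    have : y i = |C.mulVec x i| := by rw [hfix]
    rw [this, hmv, hmv]
    calc |∑ l, C i l * x l| ≤ ∑ l, |C i l * x l| := Finset.abs_sum_le_sum_abs _ _
      _ = ∑ l, C i l * y l := by
          refine Finset.sum_congr rfl fun l _ => ?_
          rw [abs_mul, abs_of_nonneg (hC0 i l)]
  have hsumCy : ∑ i, C.mulVec y i = ∑ i, y i := by
    simp only [Matrix.mulVec, dotProduct]
    rw [Finset.sum_comm]
    simp [← Finset.sum_mul, hC1]
  have hCy : C.mulVec y = y := by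
    have h0 : ∑ i, (C.mulVec y i - y i) = 0 := by
      rw [Finset.sum_sub_distrib, hsumCy, sub_self]
    have := (Finset.sum_eq_zero_iff_of_nonneg
      (fun i _ => sub_nonneg.mpr (hle i))).mp h0
    funext i
    have hi := this i (Finset.mem_univ i)
    linarith [sub_eq_zero.mp hi]
  have hpow : ∀ (z : Fin n → ℝ), C.mulVec z = z → ∀ m, (C ^ m).mulVec z = z := by
    intro z hz m
    induction m with
    | zero => simp
    | succ t ih => rw [pow_succ, ← Matrix.mulVec_mulVec, hz, ih]
  have hypos : ∀ i, 0 < y i := by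
    intro i
    obtain ⟨m, _, hCm⟩ := hCirr i j0
    have : y i = ∑ l, (C ^ m) i l * y l := by rw [← hmv, hpow y hCy m]
    rw [this]
    refine sum_pos_of_mem _ (fun l => mul_nonneg (entry_pow_nonneg C hC0 m i l) (hy0 l)) j0
      (mul_pos hCm (abs_pos.mpr hj0))
  have hxne : ∀ i, x i ≠ 0 := fun i => abs_pos.mp (hypos i)
  have hexp : ∃ i, 0 < x i := by
    by_contra hc; push_neg at hc
    have h0 : ∑ i, (-x i) = 0 := by simpa using hsum
    have := (Finset.sum_eq_zero_iff_of_nonneg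
      (fun i _ => neg_nonneg.mpr (hc i))).mp h0 j0 (Finset.mem_univ j0)
    exact hj0 (by linarith)
  have hexn : ∃ j, x j < 0 := by
    by_contra hc; push_neg at hc
    have := (Finset.sum_eq_zero_iff_of_nonneg (fun i _ => hc i)).mp hsum j0 (Finset.mem_univ j0)
    exact hj0 this
  obtain ⟨i, hi⟩ := hexp
  obtain ⟨j, hj⟩ := hexn
  obtain ⟨m, _, hCm⟩ := hCirr i j
  have e1 : x i = ∑ l, (C ^ m) i l * x l := by rw [← hmv, hpow x hfix m]
  have e2 : y i = ∑ l, (C ^ m) i l * y l := by rw [← hmv, hpow y hCy m]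
  have h0 : ∑ l, (C ^ m) i l * (y l - x l) = 0 := by
    have e3 : ∀ l, (C ^ m) i l * (y l - x l) = (C ^ m) i l * y l - (C ^ m) i l * x l := by
      intro l; ring
    rw [Finset.sum_congr rfl fun l _ => e3 l, Finset.sum_sub_distrib, ← e1, ← e2]
    have : y i = x i := abs_of_pos hi
    linarith
  have hterm := (Finset.sum_eq_zero_iff_of_nonneg
    (fun l _ => mul_nonneg (entry_pow_nonneg C hC0 m i l) (sub_nonneg.mpr (le_abs_self _)))).mp
      h0 j (Finset.mem_univ j)
  have hyxj : 0 < y j - x j := by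
    have : 0 < y j := hypos j
    linarith
  exact (mul_pos hCm hyxj).ne' hterm

lemma coarse_irred {N n : ℕ} (P : Matrix (Fin N) (Fin N) ℝ) (f : Fin N → Fin n)
    (ν : Fin N → ℝ) (hP : ColStoch P) (hirr : Irred P)
    (hf : Function.Surjective f) (hν : ∀ i, 0 < ν i) :
    ∀ k l, ∃ m : ℕ, 0 < m ∧ 0 < ((CoarseC P f ν) ^ m) k l := by
  intro k l
  obtain ⟨i, hi⟩ := hf k
  obtain ⟨j, hj⟩ := hf l
  obtain ⟨m, hm, hPm⟩ := hirr i j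
  have hP0 := hP.1
  have hPm' : 0 < (P ^ m) i j := lt_of_le_of_ne (entry_pow_nonneg P hP0 m i j) (Ne.symm hPm)
  obtain ⟨m', rfl⟩ : ∃ m', m = m' + 1 := ⟨m - 1, (Nat.succ_pred_eq_of_pos hm).symm⟩
  refine ⟨m' + 1, Nat.succ_pos _, ?_⟩
  set D := Disagg f ν with hD
  set A := Agg f with hA
  set Q := P * (D * A) with hQdef
  have hDA0 : ∀ i j, 0 ≤ (D * A) i j :=
    entry_mul_nonneg _ _ (disagg_nonneg f ν hf hν) (agg_nonneg f)
  have hQ0 : ∀ i j, 0 ≤ Q i j := entry_mul_nonneg _ _ hP0 hDA0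
  have hDAdiag : ∀ b, 0 < (D * A) b b := by
    intro b
    rw [hD, hA, disagg_mul_agg_diag]
    exact div_pos (hν b) (aggMulVec_pos f ν hf hν _)
  have hQge : ∀ a b, 0 < P a b → 0 < Q a b := by
    intro a b hab
    rw [hQdef, Matrix.mul_apply]
    exact sum_pos_of_mem _ (fun r => mul_nonneg (hP0 a r) (hDA0 r b)) b
      (mul_pos hab (hDAdiag b))
  have key : ∀ t a b, 0 < (P ^ t) a b → 0 < (Q ^ t) a b := by
    intro t
    induction t with
    | zero => intro a b h; simpa using h
    | succ t ih =>
        intro a b h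
        rw [pow_succ, Matrix.mul_apply] at h
        obtain ⟨l0, hl0⟩ := exists_pos_of_sum_pos _
          (fun r => mul_nonneg (entry_pow_nonneg P hP0 t a r) (hP0 r b)) h
        have h1 : 0 < (P ^ t) a l0 ∧ 0 < P l0 b := by
          rcases mul_pos_iff.mp hl0 with h | h
          · exact h
          · exact absurd h.1 (not_lt.mpr (entry_pow_nonneg P hP0 t a l0))
        rw [pow_succ, Matrix.mul_apply]
        exact sum_pos_of_mem _
          (fun r => mul_nonneg (entry_pow_nonneg Q hQ0 t a r) (hQ0 r b)) l0
          (mul_pos (ih a l0 h1.1) (hQge l0 b h1.2))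
  have hQP : 0 < (Q ^ m' * P) i j := by
    rw [pow_succ, Matrix.mul_apply] at hPm'
    obtain ⟨l0, hl0⟩ := exists_pos_of_sum_pos _
      (fun r => mul_nonneg (entry_pow_nonneg P hP0 m' i r) (hP0 r j)) hPm'
    have h1 : 0 < (P ^ m') i l0 ∧ 0 < P l0 j := by
      rcases mul_pos_iff.mp hl0 with h | h
      · exact h
      · exact absurd h.1 (not_lt.mpr (entry_pow_nonneg P hP0 m' i l0))
    rw [Matrix.mul_apply]
    exact sum_pos_of_mem _
      (fun r => mul_nonneg (entry_pow_nonneg Q hQ0 m' i r) (hP0 r j)) l0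
      (mul_pos (key m' i l0 h1.1) h1.2)
  have hCeq : ∀ t : ℕ, (CoarseC P f ν) ^ (t + 1) = A * ((Q ^ t * P) * D) := by
    intro t
    induction t with
    | zero => simp [CoarseC, Matrix.mul_assoc, ← hA, ← hD]
    | succ t ih =>
        rw [pow_succ, ih, CoarseC, ← hA, ← hD, hQdef]
        simp only [pow_succ, Matrix.mul_assoc]
  rw [hCeq m', Matrix.mul_apply]
  have hX0 : ∀ a b, 0 ≤ ((Q ^ m' * P) * D) a b :=
    entry_mul_nonneg _ _
      (entry_mul_nonneg _ _ (entry_pow_nonneg Q hQ0 m') hP0)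
      (disagg_nonneg f ν hf hν)
  refine sum_pos_of_mem _ (fun a => mul_nonneg (agg_nonneg f k a) (hX0 a l)) i ?_
  have hAki : A k i = 1 := by rw [hA]; simp [Agg, hi]
  rw [hAki, one_mul, Matrix.mul_apply]
  refine sum_pos_of_mem _
    (fun b => mul_nonneg (entry_mul_nonneg _ _ (entry_pow_nonneg Q hQ0 m') hP0 i b)
      (disagg_nonneg f ν hf hν b l)) j ?_
  refine mul_pos hQP ?_
  rw [hD]
  simp only [Disagg, hj, if_pos rfl]
  exact div_pos (hν j) (aggMulVec_pos f ν hf hν l)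

section B
variable {N n : ℕ} (P : Matrix (Fin N) (Fin N) ℝ) (f : Fin N → Fin n) (μ ν : Fin N → ℝ)

lemma AWD (hf : Function.Surjective f) (hν : ∀ i, 0 < ν i) :
    Agg f * vecMulVec μ 1 * Disagg f ν = vecMulVec ((Agg f).mulVec μ) 1 := by
  refine Matrix.ext fun k l => ?_
  change (Agg f * vecMulVec μ (1 : Fin N → ℝ) * Disagg f ν) k l = _
  rw [Matrix.mul_apply, vecMulVec_apply]
  have e : ∀ b : Fin N, (Agg f * vecMulVec μ 1) k b = (Agg f).mulVec μ k := by
    intro b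
    rw [Matrix.mul_apply]
    simp [vecMulVec_apply, Matrix.mulVec, dotProduct]
  simp only [e]
  rw [← Finset.mul_sum, colsum_disagg f ν hf hν l]
  simp

lemma Bform (hf : Function.Surjective f) (hν : ∀ i, 0 < ν i) :
    Agg f * (1 - P + vecMulVec μ 1) * Disagg f ν
      = 1 - CoarseC P f ν + vecMulVec ((Agg f).mulVec μ) 1 := by
  have h1 : Agg f * (1 - P + vecMulVec μ 1) * Disagg f ν
      = Agg f * Disagg f ν - Agg f * P * Disagg f ν + Agg f * vecMulVec μ 1 * Disagg f ν := by
    simp only [Matrix.mul_add, Matrix.mul_sub, Matrix.mul_one, Matrix.add_mul, Matrix.sub_mul]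
    rfl
  rw [h1, agg_mul_disagg f ν hf hν, AWD f μ ν hf hν]
  rfl

lemma vecMulVec_one_mulVec (w x : Fin n → ℝ) :
    (vecMulVec w 1).mulVec x = (∑ l, x l) • w := by
  funext k
  simp [Matrix.mulVec, dotProduct, vecMulVec_apply, Finset.mul_sum, mul_comm]

end B

end stmt9aux

/-- `A(I-P+μ𝟙ᵀ)D(ν)` is invertible, and the coarse projection
`S(ν) = D(ν)[A(I-P+μ𝟙ᵀ)D(ν)]⁻¹A(I-P+μ𝟙ᵀ)` is a projection with range `rg D(ν)`. -/
theorem stmt9 {N n : ℕ} (P : Matrix (Fin N) (Fin N) ℝ)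
    (μ : Fin N → ℝ) (hP : ColStoch P) (hirr : Irred P)
    (hμpos : ∀ i, 0 < μ i) (hμsum : ∑ i, μ i = 1) (hinv : P.mulVec μ = μ)
    (f : Fin N → Fin n) (hf : Function.Surjective f)
    (ν : Fin N → ℝ) (hνpos : ∀ i, 0 < ν i) (hνsum : ∑ i, ν i = 1) :
    IsUnit (Agg f * (1 - P + vecMulVec μ 1) * Disagg f ν) ∧
      CoarseS P f μ ν * CoarseS P f μ ν = CoarseS P f μ ν ∧
      Set.range (CoarseS P f μ ν).mulVec = Set.range (Disagg f ν).mulVec := by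
  have hB : Agg f * (1 - P + vecMulVec μ 1) * Disagg f ν
      = 1 - CoarseC P f ν + vecMulVec ((Agg f).mulVec μ) 1 := Bform P f μ ν hf hνpos
  set C := CoarseC P f ν with hCdef
  set w := (Agg f).mulVec μ with hwdef
  have hC0 : ∀ i j, 0 ≤ C i j := by
    rw [hCdef, CoarseC]
    exact entry_mul_nonneg _ _ (entry_mul_nonneg _ _ (agg_nonneg f) hP.1)
      (disagg_nonneg f ν hf hνpos)
  have hC1 : ∀ j, ∑ i, C i j = 1 := by
    rw [hCdef, CoarseC]
    exact colsum_mul _ _ (colsum_mul _ _ (colsum_agg f) hP.2) (colsum_disagg f ν hf hνpos)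
  have hCirr := coarse_irred P f ν hP hirr hf hνpos
  have hwsum : ∑ k, w k = 1 := by
    rw [hwdef, colsum_mulVec (Agg f) (colsum_agg f) μ, hμsum]
  have hker : ∀ x : Fin n → ℝ, (1 - C + vecMulVec w 1).mulVec x = 0 → x = 0 := by
    intro x hx
    have hx' : x - C.mulVec x + (∑ l, x l) • w = 0 := by
      rw [Matrix.add_mulVec, Matrix.sub_mulVec, Matrix.one_mulVec, vecMulVec_one_mulVec] at hx
      exact hx
    have hs : ∑ l, x l = 0 := by
      have h2 := congrArg (fun v : Fin n → ℝ => ∑ i, v i) hx'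
      simp only [Pi.add_apply, Pi.sub_apply, Pi.smul_apply, smul_eq_mul, Pi.zero_apply,
        Finset.sum_add_distrib, Finset.sum_sub_distrib, ← Finset.mul_sum,
        Finset.sum_const, smul_eq_mul] at h2
      rw [colsum_mulVec C hC1 x, hwsum] at h2
      simpa using h2
    have hfix : C.mulVec x = x := by
      rw [hs, zero_smul, add_zero, sub_eq_zero] at hx'
      exact hx'.symm
    exact stoch_fixed C hC0 hC1 hCirr x hfix hs
  have hinj : Function.Injective
      (Agg f * (1 - P + vecMulVec μ 1) * Disagg f ν).mulVec := by
    intro a b hab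
    have h0 : (Agg f * (1 - P + vecMulVec μ 1) * Disagg f ν).mulVec (a - b) = 0 := by
      rw [Matrix.mulVec_sub, hab, sub_self]
    rw [hB] at h0
    have := hker (a - b) h0
    exact sub_eq_zero.mp this
  have hunit : IsUnit (Agg f * (1 - P + vecMulVec μ 1) * Disagg f ν) :=
    Matrix.mulVec_injective_iff_isUnit.mp hinj
  have hdet := (Matrix.isUnit_iff_isUnit_det _).mp hunit
  have hBi2 : (Agg f * (1 - P + vecMulVec μ 1) * Disagg f ν)⁻¹ *
      (Agg f * (1 - P + vecMulVec μ 1) * Disagg f ν) = 1 :=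
    Matrix.nonsing_inv_mul _ hdet
  set D := Disagg f ν with hDdef
  set M0 := Agg f * (1 - P + vecMulVec μ 1) with hM0
  set T := (M0 * D)⁻¹ * M0 with hT
  have hS : CoarseS P f μ ν = D * T := by
    rw [CoarseS, hT, ← hDdef, ← hM0, Matrix.mul_assoc]
  have hTD : T * D = 1 := by
    rw [hT, Matrix.mul_assoc]
    exact hBi2
  have hSD : CoarseS P f μ ν * D = D := by
    rw [hS, Matrix.mul_assoc, hTD, Matrix.mul_one]
  refine ⟨hunit, ?_, ?_⟩
  · rw [hS]
    calc D * T * (D * T) = D * (T * D * T) := by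
          rw [Matrix.mul_assoc, ← Matrix.mul_assoc T D T]
      _ = D * T := by rw [hTD, Matrix.one_mul]
  · apply Set.eq_of_subset_of_subset
    · rintro v ⟨u, rfl⟩
      exact ⟨T.mulVec u, by rw [hS, Matrix.mulVec_mulVec]⟩
    · rintro v ⟨u, rfl⟩
      exact ⟨D.mulVec u, by rw [Matrix.mulVec_mulVec, hSD]⟩
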